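/- Let (X, d) be a metric space with positive Hausdorff dimension, let 0 < r < 1, and let k ≥ 1. Then there is no map ι : X → ℝ^k such that ‖ι(x) − ι(x')‖ = d(x, x')^r for all x, x' ∈ X. That is, the r-snowflake of (X, d) does not admit an isometric embedding into euclidean space. -/

import Mathlib

open scoped RealInnerProductSpace
set_option maxHeartbeats 2000000

/-- Key scalar inequality: for `0 < b < a` and `0 < p ≤ 2`,
`a ^ p - (a - b) ^ p ≤ 2 * a ^ (p - 1) * b` (real powers). -/
private lemma snowflake_key_ineq {a b p : ℝ} (hb : 0 < b) (hba : b < a)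
    (hp : 0 < p) (hp2 : p ≤ 2) :
    a ^ p ≤ (a - b) ^ p + 2 * a ^ (p - 1) * b := by
  have ha : 0 < a := hb.trans hba
  set c : ℝ := (a - b) / a with hcdef
  have hc0 : 0 < c := div_pos (by linarith) ha
  have hc1 : c ≤ 1 := by
    rw [hcdef, div_le_one ha]; linarith
  have h1 : c ^ (2 : ℝ) ≤ c ^ p := Real.rpow_le_rpow_of_exponent_ge hc0 hc1 hp2
  have hc2 : c ^ (2 : ℝ) = c * c := by
    rw [show (2 : ℝ) = ((2 : ℕ) : ℝ) by norm_num, Real.rpow_natCast]; ring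
  have hceq : c = 1 - b / a := by
    rw [hcdef]; field_simp
  have h2 : (1 : ℝ) - 2 * (b / a) ≤ c ^ (2 : ℝ) := by
    rw [hc2, hceq]
    nlinarith [sq_nonneg (b / a)]
  have h3 : (1 : ℝ) - 2 * (b / a) ≤ c ^ p := h2.trans h1
  have hap : 0 < a ^ p := Real.rpow_pos_of_pos ha p
  have h4 : a ^ p * c ^ p = (a - b) ^ p := by
    rw [← Real.mul_rpow ha.le hc0.le, hcdef, mul_div_cancel₀ _ ha.ne']
  have h5 : a ^ (p - 1) = a ^ p / a := by
    rw [Real.rpow_sub ha, Real.rpow_one]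
  have h6 : a ^ p * (2 * (b / a)) = 2 * a ^ (p - 1) * b := by
    rw [h5]; field_simp
  have h7 := mul_le_mul_of_nonneg_left h3 hap.le
  nlinarith [h7, h4, h6]

/-- If `(X, d)` has positive Hausdorff dimension and `0 < r < 1`, then the `r`-snowflake of
`(X, d)` admits no isometric embedding into euclidean space `ℝ^k`: there is no map
`ι : X → ℝ^k` with `‖ι x − ι x'‖ = d(x, x')^r` for all `x, x'`. -/
theorem no_isometric_embedding_of_snowflake {X : Type*} [MetricSpace X]
    (hX : 0 < dimH (Set.univ : Set X))
    (r : ℝ) (hr0 : 0 < r) (hr1 : r < 1)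
    (k : ℕ) (hk : 1 ≤ k) :
    ¬ ∃ ι : X → EuclideanSpace ℝ (Fin k),
        ∀ x x' : X, ‖ι x - ι x'‖ = dist x x' ^ r := by
  rintro ⟨ι, hι⟩
  have h1r : (0 : ℝ) < 1 - r := by linarith
  by_cases hacc : ∃ x : X, ∀ ε : ℝ, 0 < ε → ∃ y : X, y ≠ x ∧ dist y x < ε
  · -- main case : there is an accumulation point
    obtain ⟨x, hx⟩ := hacc
    -- choose the contraction factor η
    set η : ℝ := min ((4 : ℝ)⁻¹ ^ r⁻¹) ((4 : ℝ)⁻¹ ^ (1 - r)⁻¹) with hηdef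
    have hη0 : 0 < η :=
      lt_min (Real.rpow_pos_of_pos (by norm_num) _) (Real.rpow_pos_of_pos (by norm_num) _)
    have hη1 : η < 1 :=
      lt_of_le_of_lt (min_le_left _ _)
        (Real.rpow_lt_one (by norm_num) (by norm_num) (by positivity))
    have hηr : η ^ r ≤ 4⁻¹ := by
      calc η ^ r ≤ ((4 : ℝ)⁻¹ ^ r⁻¹) ^ r :=
            Real.rpow_le_rpow hη0.le (min_le_left _ _) hr0.le
        _ = 4⁻¹ := Real.rpow_inv_rpow (by norm_num) hr0.ne'
    have hη1r : η ^ (1 - r) ≤ 4⁻¹ := by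
      calc η ^ (1 - r) ≤ ((4 : ℝ)⁻¹ ^ (1 - r)⁻¹) ^ (1 - r) :=
            Real.rpow_le_rpow hη0.le (min_le_right _ _) h1r.le
        _ = 4⁻¹ := Real.rpow_inv_rpow (by norm_num) h1r.ne'
    -- construct a rapidly converging sequence of points distinct from x
    choose g hg1 hg2 using hx
    obtain ⟨Y, hstep⟩ : ∃ Y : ℕ → {z : X // z ≠ x},
        ∀ n, dist (Y (n + 1)).1 x < η * dist (Y n).1 x :=
      ⟨fun n => Nat.rec ⟨g 1 one_pos, hg1 1 one_pos⟩
        (fun _ p => ⟨g (η * dist (p.1) x) (mul_pos hη0 (dist_pos.mpr p.2)),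
          hg1 _ _⟩) n, fun n => hg2 _ _⟩
    clear hg1 hg2 g
    set d : ℕ → ℝ := fun n => dist (Y n).1 x with hddef
    have hdpos : ∀ n, 0 < d n := fun n => dist_pos.mpr (Y n).2
    have hstep' : ∀ n, d (n + 1) < η * d n := hstep
    have hlt : ∀ n m, n < m → d m ≤ η * d n := by
      intro n m h
      induction m, h using Nat.le_induction with
      | base => exact (hstep' n).le
      | succ m hm ih => nlinarith [hstep' m, hdpos n, hdpos m, hη0, hη1, ih]
    -- the normalized difference vectors
    set v : ℕ → EuclideanSpace ℝ (Fin k) := fun n => ι (Y n).1 - ι x with hvdef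
    have hvnorm : ∀ n, ‖v n‖ = d n ^ r := fun n => hι _ _
    have hvpos : ∀ n, 0 < ‖v n‖ := fun n => by
      rw [hvnorm n]; exact Real.rpow_pos_of_pos (hdpos n) r
    set u : ℕ → EuclideanSpace ℝ (Fin k) := fun n => ‖v n‖⁻¹ • v n with hudef
    have hunorm : ∀ n, ‖u n‖ = 1 := by
      intro n
      rw [hudef]
      simp only [norm_smul, norm_inv, norm_norm]
      exact inv_mul_cancel₀ (hvpos n).ne'
    -- the inner product estimate
    have hpair : ∀ n m, n < m → ⟪u n, u m⟫ ≤ 1 / 2 := by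
      intro n m hnm
      set a : ℝ := d n with hadef
      set b : ℝ := d m with hbdef
      have ha0 : 0 < a := hdpos n
      have hb0 : 0 < b := hdpos m
      have hbη : b ≤ η * a := hlt n m hnm
      have hba : b < a := lt_of_le_of_lt hbη (by nlinarith)
      -- lower bound for the distance between the two points
      have htri : a - b ≤ dist (Y n).1 (Y m).1 := by
        have := dist_triangle (Y n).1 (Y m).1 x
        simp only [← hadef, ← hbdef] at *
        linarith [dist_triangle (Y n).1 (Y m).1 x]
      have hvsub : ‖v n - v m‖ = dist (Y n).1 (Y m).1 ^ r := by
        rw [hvdef]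
        simp only [sub_sub_sub_cancel_right]
        exact hι _ _
      have hCge : (a - b) ^ r ≤ ‖v n - v m‖ := by
        rw [hvsub]
        exact Real.rpow_le_rpow (by linarith) htri hr0.le
      have habpos : (0:ℝ) < a - b := by linarith
      -- squares as rpow
      have hsq : ∀ t : ℝ, 0 < t → (t ^ r) ^ 2 = t ^ (2 * r) := by
        intro t ht
        rw [show 2 * r = r + r by ring, Real.rpow_add ht, sq]
      -- inner product of v's
      have hinner : 2 * ⟪v n, v m⟫ = ‖v n‖ ^ 2 + ‖v m‖ ^ 2 - ‖v n - v m‖ ^ 2 := by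
        have := norm_sub_sq_real (v n) (v m)
        linarith
      have hC2 : (a - b) ^ (2 * r) ≤ ‖v n - v m‖ ^ 2 := by
        rw [← hsq _ habpos]
        have h0 : 0 ≤ (a - b) ^ r := (Real.rpow_pos_of_pos habpos r).le
        nlinarith [hCge]
      have hkey : a ^ (2 * r) ≤ (a - b) ^ (2 * r) + 2 * a ^ (2 * r - 1) * b :=
        snowflake_key_ineq hb0 hba (by linarith) (by linarith)
      -- bound b ^ (2r)
      have hBle : b ^ r ≤ 4⁻¹ * a ^ r := by
        calc b ^ r ≤ (η * a) ^ r := Real.rpow_le_rpow hb0.le hbη hr0.le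
          _ = η ^ r * a ^ r := Real.mul_rpow hη0.le ha0.le
          _ ≤ 4⁻¹ * a ^ r := by
              have := Real.rpow_pos_of_pos ha0 r
              nlinarith
      have hb2r : b ^ (2 * r) ≤ 4⁻¹ * (a ^ r * b ^ r) := by
        have h1 : b ^ (2 * r) = b ^ r * b ^ r := by
          rw [show 2 * r = r + r by ring, Real.rpow_add hb0]
        rw [h1]
        have hbr : 0 < b ^ r := Real.rpow_pos_of_pos hb0 r
        nlinarith [hBle]
      -- bound a^(2r-1) * b
      have hmid : a ^ (2 * r - 1) * b ≤ 4⁻¹ * (a ^ r * b ^ r) := by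
        have hid : a ^ (2 * r - 1) * b = (a ^ r * b ^ r) * ((b / a) ^ (1 - r)) := by
          rw [Real.div_rpow hb0.le ha0.le]
          rw [show (2 * r - 1) = r - (1 - r) by ring, Real.rpow_sub ha0]
          have hb1 : b ^ r * b ^ (1 - r) = b := by
            rw [← Real.rpow_add hb0]; norm_num
          have ha1 : (0:ℝ) < a ^ (1 - r) := Real.rpow_pos_of_pos ha0 _
          field_simp
          linear_combination (-1 : ℝ) * hb1
        have hfrac : (b / a) ^ (1 - r) ≤ 4⁻¹ := by
          calc (b / a) ^ (1 - r) ≤ η ^ (1 - r) := by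
                apply Real.rpow_le_rpow (by positivity) _ h1r.le
                rw [div_le_iff₀ ha0]
                nlinarith
            _ ≤ 4⁻¹ := hη1r
        calc a ^ (2 * r - 1) * b = (a ^ r * b ^ r) * ((b / a) ^ (1 - r)) := hid
          _ ≤ (a ^ r * b ^ r) * 4⁻¹ := by
              apply mul_le_mul_of_nonneg_left hfrac
              positivity
          _ = 4⁻¹ * (a ^ r * b ^ r) := by ring
      -- combine : 2 * inner (v n) (v m) ≤ a^r * b^r
      have hA2 : ‖v n‖ ^ 2 = a ^ (2 * r) := by rw [hvnorm n, hsq _ ha0]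
      have hB2 : ‖v m‖ ^ 2 = b ^ (2 * r) := by rw [hvnorm m, hsq _ hb0]
      have hvv : 2 * ⟪v n, v m⟫ ≤ a ^ r * b ^ r := by
        rw [hinner, hA2, hB2]
        nlinarith [hC2, hkey, hb2r, hmid]
      -- deduce the bound for u
      have huv : ⟪u n, u m⟫ = ‖v n‖⁻¹ * (‖v m‖⁻¹ * ⟪v n, v m⟫) := by
        rw [hudef]
        rw [real_inner_smul_left, real_inner_smul_right]
      rw [huv, hvnorm n, hvnorm m]
      have har : 0 < a ^ r := Real.rpow_pos_of_pos ha0 r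
      have hbr : 0 < b ^ r := Real.rpow_pos_of_pos hb0 r
      rw [div_eq_mul_inv, one_mul]
      calc (a ^ r)⁻¹ * ((b ^ r)⁻¹ * ⟪v n, v m⟫)
          ≤ (a ^ r)⁻¹ * ((b ^ r)⁻¹ * (a ^ r * b ^ r / 2)) := by
            apply mul_le_mul_of_nonneg_left _ (by positivity)
            apply mul_le_mul_of_nonneg_left _ (by positivity)
            linarith
        _ = 2⁻¹ := by field_simp
    -- the u's are 1-separated
    have hsep : ∀ n m, n < m → 1 ≤ dist (u n) (u m) := by
      intro n m hnm
      have hin := hpair n m hnm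
      have h1 : ‖u n - u m‖ ^ 2 = 2 - 2 * ⟪u n, u m⟫ := by
        have := norm_sub_sq_real (u n) (u m)
        rw [hunorm n, hunorm m] at this
        linarith
      have h2 : 1 ≤ ‖u n - u m‖ ^ 2 := by rw [h1]; linarith
      rw [dist_eq_norm]
      nlinarith [norm_nonneg (u n - u m)]
    -- contradiction with compactness of the closed unit ball
    have hball : ∀ n, u n ∈ Metric.closedBall (0 : EuclideanSpace ℝ (Fin k)) 1 := by
      intro n
      rw [Metric.mem_closedBall, dist_zero_right, hunorm n]
    obtain ⟨L, _, φ, hφ, hconv⟩ :=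
      (isCompact_closedBall (0 : EuclideanSpace ℝ (Fin k)) 1).tendsto_subseq hball
    rw [Metric.tendsto_atTop] at hconv
    obtain ⟨N, hN⟩ := hconv 2⁻¹ (by norm_num)
    have hA := hN N le_rfl
    have hB := hN (N + 1) (Nat.le_succ N)
    have hlt' : dist (u (φ N)) (u (φ (N + 1))) < 1 := by
      calc dist (u (φ N)) (u (φ (N + 1)))
          ≤ dist (u (φ N)) L + dist L (u (φ (N + 1))) := dist_triangle _ _ _
        _ < 2⁻¹ + 2⁻¹ := by
            rw [dist_comm L]
            exact add_lt_add hA hB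
        _ = 1 := by norm_num
    exact absurd hlt' (not_lt.2 (hsep _ _ (hφ (Nat.lt_succ_self N))))
  · -- discrete case : X is countable, contradicting positive dimension
    push_neg at hacc
    have hemb : IsUniformEmbedding ι := by
      rw [Metric.isUniformEmbedding_iff']
      constructor
      · intro ε hε
        refine ⟨ε ^ r⁻¹, Real.rpow_pos_of_pos hε _, fun {a b} hab => ?_⟩
        rw [dist_eq_norm, hι]
        calc dist a b ^ r < (ε ^ r⁻¹) ^ r := Real.rpow_lt_rpow dist_nonneg hab hr0
          _ = ε := Real.rpow_inv_rpow hε.le hr0.ne'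
      · intro δ hδ
        refine ⟨δ ^ r, Real.rpow_pos_of_pos hδ _, fun {a b} hab => ?_⟩
        rw [dist_eq_norm, hι] at hab
        by_contra hle
        push_neg at hle
        exact absurd hab (not_lt.2 (Real.rpow_le_rpow hδ.le hle hr0.le))
    haveI : SecondCountableTopology X :=
      hemb.isEmbedding.toIsInducing.secondCountableTopology
    haveI : DiscreteTopology X := by
      rw [discreteTopology_iff_isOpen_singleton]
      intro z
      obtain ⟨ε, hε, hz⟩ := hacc z
      have hset : ({z} : Set X) = Metric.ball z ε := by
        ext y
        simp only [Set.mem_singleton_iff, Metric.mem_ball]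
        constructor
        · rintro rfl; simpa using hε
        · intro hy
          by_contra hne
          exact absurd hy (not_lt.2 (hz y hne))
      rw [hset]
      exact Metric.isOpen_ball
    haveI : Countable X := TopologicalSpace.separableSpace_iff_countable.mp inferInstance
    exact hX.ne' (dimH_countable Set.countable_univ)
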